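/- arXiv:1408.2932 — 2 statements merged into one kernel-verified Lean document; each statement's English description precedes it below -/
import Mathlib

section
/- Let H₁, H₂ : ℝ² → ℝ be compactly supported Lipschitz functions such that H₁ is monotone, i.e. the level set H₁^{-1}(h) is connected for every h ∈ ℝ, and such that the measures |∇H₁|·L² and |∇H₂|·L² are mutually singular (where ∇H_i denotes the a.e.-defined gradient and L² is Lebesgue measure on ℝ²). Then for Lebesgue-a.e. h ∈ ℝ, the function H₂ is constant on the level set H₁^{-1}(h). -/
open MeasureTheory Set Filter
open scoped Topology ENNReal NNReal

noncomputable section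

open Module

local notation "𝔼" => EuclideanSpace ℝ (Fin 2)

/-- **Constancy on level sets of a monotone Lipschitz function.**
Let `H₁, H₂ : ℝ² → ℝ` be compactly supported Lipschitz functions, `H₁` monotone (all of
its level sets are connected), and suppose the measures `|∇H₁|·L²` and `|∇H₂|·L²` are
mutually singular.  Then for a.e. `h ∈ ℝ` the function `H₂` is constant on `H₁⁻¹(h)`. -/
theorem constant_on_level_sets_of_monotone
    (H₁ H₂ : EuclideanSpace ℝ (Fin 2) → ℝ) (K₁ K₂ : ℝ≥0)
    (h₁lip : LipschitzWith K₁ H₁) (h₂lip : LipschitzWith K₂ H₂)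
    (h₁supp : HasCompactSupport H₁) (h₂supp : HasCompactSupport H₂)
    (h₁mono : ∀ h : ℝ, IsPreconnected (H₁ ⁻¹' {h}))
    (hsing : (volume.withDensity fun x => ENNReal.ofReal ‖gradient H₁ x‖) ⟂ₘ
      (volume.withDensity fun x => ENNReal.ofReal ‖gradient H₂ x‖)) :
    ∀ᵐ h ∂(volume : Measure ℝ),
      ∀ x ∈ H₁ ⁻¹' {h}, ∀ y ∈ H₁ ⁻¹' {h}, H₂ x = H₂ y := by
  classical
  -- Step 1 : a.e. alternative on the (Fréchet) derivatives
  have hgm : ∀ H : 𝔼 → ℝ, Measurable fun x => ENNReal.ofReal ‖gradient H x‖ := fun H =>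
    ENNReal.measurable_ofReal.comp
      (((InnerProductSpace.toDual ℝ 𝔼).symm.continuous.measurable).comp
        (measurable_fderiv ℝ H)).norm
  obtain ⟨u, hu, hu₁, hu₂⟩ := hsing
  have key : ∀ (H : 𝔼 → ℝ) (v : Set 𝔼), MeasurableSet v →
      (volume.withDensity fun x => ENNReal.ofReal ‖gradient H x‖) v = 0 →
      ∀ᵐ x : 𝔼, x ∈ v → fderiv ℝ H x = 0 := by
    intro H v hv h0
    rw [withDensity_apply _ hv] at h0
    filter_upwards [(setLIntegral_eq_zero_iff hv (hgm H)).mp h0] with x hx hxv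
    have h1 : gradient H x = 0 := by
      have := hx hxv
      simp only [Pi.zero_apply, ENNReal.ofReal_eq_zero] at this
      simpa using le_antisymm this (norm_nonneg _)
    have h2 : fderiv ℝ H x = (InnerProductSpace.toDual ℝ 𝔼) (gradient H x) := by
      simp [gradient]
    rw [h2, h1, map_zero]
  have hae : ∀ᵐ x : 𝔼, fderiv ℝ H₁ x = 0 ∨ fderiv ℝ H₂ x = 0 := by
    filter_upwards [key H₁ u hu hu₁, key H₂ uᶜ hu.compl hu₂] with x h1 h2
    by_cases hx : x ∈ u
    · exact Or.inl (h1 hx)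
    · exact Or.inr (h2 hx)
  -- Step 2 : the good set `s`
  set s : Set 𝔼 := {x | DifferentiableAt ℝ H₁ x ∧ DifferentiableAt ℝ H₂ x ∧
    (fderiv ℝ H₁ x = 0 ∨ fderiv ℝ H₂ x = 0)} with hs_def
  have hsc : volume sᶜ = 0 := by
    have n1 : volume {x : 𝔼 | ¬ DifferentiableAt ℝ H₁ x} = 0 :=
      ae_iff.mp (h₁lip.ae_differentiableAt (μ := volume))
    have n2 : volume {x : 𝔼 | ¬ DifferentiableAt ℝ H₂ x} = 0 :=
      ae_iff.mp (h₂lip.ae_differentiableAt (μ := volume))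
    have n3 : volume {x : 𝔼 | ¬ (fderiv ℝ H₁ x = 0 ∨ fderiv ℝ H₂ x = 0)} = 0 :=
      ae_iff.mp hae
    have hsub : sᶜ ⊆ {x : 𝔼 | ¬ DifferentiableAt ℝ H₁ x} ∪
        ({x : 𝔼 | ¬ DifferentiableAt ℝ H₂ x} ∪
          {x : 𝔼 | ¬ (fderiv ℝ H₁ x = 0 ∨ fderiv ℝ H₂ x = 0)}) := by
      intro x hx
      simp only [hs_def, mem_compl_iff, mem_setOf_eq, not_and_or] at hx
      rcases hx with h | h | h
      · exact Or.inl h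
      · exact Or.inr (Or.inl h)
      · exact Or.inr (Or.inr h)
    exact measure_mono_null hsub (measure_union_null n1 (measure_union_null n2 n3))
  -- Step 3 : the map `G` and its derivative on `s`
  set cle := (PiLp.continuousLinearEquiv 2 ℝ (fun _ : Fin 2 => ℝ)).symm with hcle
  set G : 𝔼 → 𝔼 := fun x => cle ![H₁ x, H₂ x] with hG
  set f' : 𝔼 → 𝔼 →L[ℝ] 𝔼 := fun x =>
    (cle : (Fin 2 → ℝ) →L[ℝ] 𝔼).comp
      (ContinuousLinearMap.pi ![fderiv ℝ H₁ x, fderiv ℝ H₂ x]) with hf'def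
  have hf' : ∀ x ∈ s, HasFDerivWithinAt G (f' x) s x := by
    intro x hx
    apply (hasFDerivWithinAt_piLp 2).mpr
    intro i
    have hproj : (PiLp.proj 2 (fun _ : Fin 2 => ℝ) i).comp (f' x)
        = ![fderiv ℝ H₁ x, fderiv ℝ H₂ x] i := rfl
    show HasFDerivWithinAt (fun y => G y i) ((PiLp.proj 2 (fun _ : Fin 2 => ℝ) i).comp (f' x)) s x
    rw [hproj]
    fin_cases i
    · exact (hx.1).hasFDerivAt.hasFDerivWithinAt
    · exact (hx.2.1).hasFDerivAt.hasFDerivWithinAt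
  -- Step 4 : the determinant of this derivative vanishes on `s`
  have hdet : ∀ x ∈ s, (f' x).det = 0 := by
    intro x hx
    by_contra hne
    have hinj : Function.Injective (f' x) :=
      (LinearMap.equivOfDetNeZero ((f' x) : 𝔼 →ₗ[ℝ] 𝔼) hne).injective
    have hker : ∀ ψ : 𝔼 →L[ℝ] ℝ, ∃ v : 𝔼, v ≠ 0 ∧ ψ v = 0 := by
      intro ψ
      by_contra hcon
      push_neg at hcon
      have hψinj : Function.Injective ψ := by
        intro a b hab
        by_contra hab'
        exact hcon (a - b) (sub_ne_zero.mpr hab') (by simp [map_sub, hab])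
      have hle := LinearMap.finrank_le_finrank_of_injective
        (f := (ψ : 𝔼 →ₗ[ℝ] ℝ)) hψinj
      rw [finrank_euclideanSpace_fin, finrank_self] at hle
      omega
    have hget : ∃ v : 𝔼, v ≠ 0 ∧ fderiv ℝ H₁ x v = 0 ∧ fderiv ℝ H₂ x v = 0 := by
      rcases hx.2.2 with hz | hz
      · obtain ⟨v, hv0, hv⟩ := hker (fderiv ℝ H₂ x)
        exact ⟨v, hv0, by simp [hz], hv⟩
      · obtain ⟨v, hv0, hv⟩ := hker (fderiv ℝ H₁ x)
        exact ⟨v, hv0, hv, by simp [hz]⟩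
    obtain ⟨v, hv0, hv1, hv2⟩ := hget
    have hpiv : ContinuousLinearMap.pi ![fderiv ℝ H₁ x, fderiv ℝ H₂ x] v = 0 := by
      funext i
      fin_cases i <;> simp [hv1, hv2]
    have : f' x v = f' x 0 := by
      simp only [hf'def, ContinuousLinearMap.comp_apply, hpiv, map_zero]
    exact hv0 (hinj this)
  -- Step 5 : `G '' s` is Lebesgue-null
  have himg : volume (G '' s) = 0 :=
    addHaar_image_eq_zero_of_det_fderivWithin_eq_zero volume hf' hdet
  -- Step 6 : `F '' sᶜ` is Lebesgue-null (Lipschitz image of a null set, via Hausdorff measure)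
  haveI i1 : (μH[2] : Measure 𝔼).IsAddHaarMeasure := by
    have := isAddHaarMeasure_hausdorffMeasure (E := 𝔼)
    simpa [finrank_euclideanSpace_fin] using this
  haveI i2 : (μH[2] : Measure (ℝ × ℝ)).IsAddHaarMeasure := by
    have := isAddHaarMeasure_hausdorffMeasure (E := ℝ × ℝ)
    simpa [Module.finrank_prod] using this
  have ac1 : (μH[2] : Measure 𝔼) ≪ volume :=
    Measure.absolutelyContinuous_isAddHaarMeasure _ _
  have ac2 : (volume : Measure (ℝ × ℝ)) ≪ μH[2] :=
    Measure.absolutelyContinuous_isAddHaarMeasure _ _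
  set F : 𝔼 → ℝ × ℝ := fun x => (H₁ x, H₂ x) with hF
  have hFlip : LipschitzWith (max K₁ K₂) F := h₁lip.prodMk h₂lip
  have himg2 : volume (F '' sᶜ) = 0 := by
    apply ac2
    have h0 : (μH[2] : Measure 𝔼) sᶜ = 0 := ac1 hsc
    have hle := hFlip.hausdorffMeasure_image_le (by norm_num : (0:ℝ) ≤ 2) sᶜ
    refine le_antisymm (hle.trans ?_) zero_le
    rw [h0, mul_zero]
  -- Step 7 : transfer `G '' s` to `F '' s` by the measure-preserving identification
  have hqmp : MeasurePreserving (((MeasurableEquiv.toLp 2 (Fin 2 → ℝ)).symm).trans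
      (MeasurableEquiv.piFinTwo fun _ => ℝ)) volume volume :=
    (volume_preserving_piFinTwo _).comp (EuclideanSpace.volume_preserving_symm_measurableEquiv_toLp _)
  set q := ((MeasurableEquiv.toLp 2 (Fin 2 → ℝ)).symm).trans
      (MeasurableEquiv.piFinTwo fun _ => ℝ) with hq
  have hFq : F = ⇑q ∘ G := by funext x; rfl
  have himg1 : volume (F '' s) = 0 := by
    obtain ⟨t', ht'sub, ht'meas, ht'0⟩ := exists_measurable_superset_of_null himg
    have hsub : F '' s ⊆ ⇑q.symm ⁻¹' t' := by
      rw [hFq, image_comp]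
      refine (subset_trans (image_mono ht'sub) ?_)
      intro z hz
      obtain ⟨w, hw, rfl⟩ := hz
      simpa using hw
    refine measure_mono_null hsub ?_
    rw [(MeasurePreserving.symm q hqmp).measure_preimage_equiv]
    exact ht'0
  -- Step 8 : the range of `F` is null ; slice it with Fubini
  have hrange : volume (range F) = 0 := by
    have hsub : range F ⊆ F '' s ∪ F '' sᶜ := by
      rw [← image_union, union_compl_self, image_univ]
    exact measure_mono_null hsub (measure_union_null himg1 himg2)
  obtain ⟨t, htsub, htmeas, ht0⟩ := exists_measurable_superset_of_null hrange
  rw [Measure.volume_eq_prod] at ht0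
  have hslice : ∀ᵐ h ∂(volume : Measure ℝ), volume (Prod.mk h ⁻¹' t) = 0 :=
    (Measure.measure_prod_null htmeas).mp ht0
  -- Step 9 : conclusion via connectedness of the level sets
  filter_upwards [hslice] with h hh x hx y hy
  have hxy : ∀ z ∈ H₁ ⁻¹' {h}, H₂ z ∈ Prod.mk h ⁻¹' t := by
    intro z hz
    have hz' : H₁ z = h := hz
    have : F z ∈ t := htsub (mem_range_self z)
    simpa [hF, hz'] using this
  have hconn : OrdConnected (H₂ '' (H₁ ⁻¹' {h})) :=
    ((h₁mono h).image H₂ (h₂lip.continuous.continuousOn)).ordConnected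
  have main : ∀ a b : 𝔼, a ∈ H₁ ⁻¹' {h} → b ∈ H₁ ⁻¹' {h} → H₂ a < H₂ b → False := by
    intro a b ha hb hab
    have hIcc : Icc (H₂ a) (H₂ b) ⊆ Prod.mk h ⁻¹' t := by
      intro z hzI
      have hz : z ∈ H₂ '' (H₁ ⁻¹' {h}) :=
        hconn.out (mem_image_of_mem _ ha) (mem_image_of_mem _ hb) hzI
      obtain ⟨w, hw, rfl⟩ := hz
      exact hxy w hw
    have h0 := measure_mono_null hIcc hh
    rw [Real.volume_Icc] at h0
    exact (ENNReal.ofReal_pos.mpr (by linarith : (0:ℝ) < H₂ b - H₂ a)).ne' h0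
  rcases lt_trichotomy (H₂ x) (H₂ y) with hlt | heq | hgt
  · exact absurd (main x y hx hy hlt) (fun f => f)
  · exact heq
  · exact absurd (main y x hy hx hgt) (fun f => f)
end
end

section
/- Let Ω ⊂ ℝ² be an open set and let H : Ω → ℝ be a Lipschitz function with bounded support. Then for Lebesgue-a.e. h ∈ H(Ω) the level set E_h := H^{-1}(h) satisfies: (1) H¹(E_h) < ∞ and E_h is 1-rectifiable, i.e. there exist countably many Lipschitz maps f_i : ℝ → ℝ² such that H¹( E_h \ ⋃_i f_i(ℝ) ) = 0; (2) for H¹-a.e. x ∈ E_h, the function H is differentiable at x and ∇H(x) ≠ 0. -/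
open MeasureTheory Set Filter
open scoped Topology ENNReal NNReal

noncomputable section

section Aux

open Metric
open scoped RealInnerProductSpace

namespace LSR

abbrev E2 : Type := EuclideanSpace ℝ (Fin 2)


/-- dyadic square of generation n -/
def sq (n : ℕ) (f : Fin 2 → ℤ) : Set E2 := {x | ∀ c, ⌊x c * 2 ^ n⌋ = f c}

lemma mem_sq_iff {n : ℕ} {f : Fin 2 → ℤ} {x : E2} :
    x ∈ sq n f ↔ ∀ c, x c ∈ Ico ((f c : ℝ) / 2 ^ n) ((f c + 1) / 2 ^ n) := by
  have h2 : (0:ℝ) < 2 ^ n := by positivity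
  simp only [sq, mem_setOf_eq, mem_Ico, div_le_iff₀ h2, lt_div_iff₀ h2]
  refine forall_congr' fun c => ?_
  rw [Int.floor_eq_iff]

lemma sq_cover (n : ℕ) (x : E2) : x ∈ sq n (fun c => ⌊x c * 2 ^ n⌋) := fun _ => rfl

lemma sq_disj (n : ℕ) : Pairwise (Function.onFun Disjoint (sq n)) := by
  intro f g hfg
  rw [Function.onFun, Set.disjoint_left]
  intro x hx hx'
  exact hfg (funext fun c => (hx c).symm.trans (hx' c))

lemma measurableSet_sq (n : ℕ) (f : Fin 2 → ℤ) : MeasurableSet (sq n f) := by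
  have : sq n f = ⋂ c, (fun x : E2 => x c) ⁻¹' {y : ℝ | ⌊y * 2 ^ n⌋ = f c} := by
    ext x; simp [sq]
  rw [this]
  refine MeasurableSet.iInter fun c => ?_
  have : Measurable fun x : E2 => x c := (EuclideanSpace.proj c).continuous.measurable
  exact this ((Int.measurable_floor.comp (measurable_id.mul_const _)) (MeasurableSet.singleton (f c)))

lemma volume_sq (n : ℕ) (f : Fin 2 → ℤ) :
    volume (sq n f) = (ENNReal.ofReal ((2:ℝ)⁻¹ ^ n)) ^ 2 := by
  have : sq n f = ((MeasurableEquiv.toLp 2 (Fin 2 → ℝ)).symm) ⁻¹'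
      (Set.pi univ fun c => Ico ((f c : ℝ) / 2 ^ n) ((f c + 1) / 2 ^ n)) := by
    ext x
    simp only [mem_preimage, Set.mem_pi, mem_univ, forall_true_left, mem_sq_iff]
    rfl
  rw [this, (EuclideanSpace.volume_preserving_symm_measurableEquiv_toLp (Fin 2)).measure_preimage
      (MeasurableSet.univ_pi fun c => measurableSet_Ico).nullMeasurableSet,
    volume_pi_pi]
  have : ∀ c : Fin 2, volume (Ico ((f c : ℝ) / 2 ^ n) ((f c + 1) / 2 ^ n))
      = ENNReal.ofReal ((2:ℝ)⁻¹ ^ n) := by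
    intro c
    rw [Real.volume_Ico]
    congr 1
    field_simp
    rw [← mul_pow]; norm_num
  simp [this, Finset.prod_const, sq]

lemma dist_le_of_mem_sq {n : ℕ} {f : Fin 2 → ℤ} {x y : E2}
    (hx : x ∈ sq n f) (hy : y ∈ sq n f) : dist x y ≤ 2 * (2:ℝ)⁻¹ ^ n := by
  rw [mem_sq_iff] at hx hy
  have hc : ∀ c, |x c - y c| ≤ (2:ℝ)⁻¹ ^ n := by
    intro c
    have h1 := hx c; have h2 := hy c
    simp only [mem_Ico] at h1 h2
    rw [abs_le]
    have : ((f c : ℝ) + 1) / 2 ^ n - (f c : ℝ) / 2 ^ n = (2:ℝ)⁻¹ ^ n := by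
      field_simp
      rw [← mul_pow]; norm_num
    constructor <;> nlinarith [h1.1, h1.2, h2.1, h2.2]
  have hnn : (0:ℝ) ≤ (2:ℝ)⁻¹ ^ n := by positivity
  rw [EuclideanSpace.dist_eq]
  have : ∀ c : Fin 2, dist (x c) (y c) ^ 2 ≤ ((2:ℝ)⁻¹ ^ n) ^ 2 := by
    intro c
    rw [Real.dist_eq]
    exact sq_le_sq' (by linarith [abs_nonneg (x c - y c), (hc c)]) (hc c) |>.trans_eq rfl
  calc Real.sqrt (∑ c : Fin 2, dist (x c) (y c) ^ 2)
      ≤ Real.sqrt (∑ c : Fin 2, ((2:ℝ)⁻¹ ^ n) ^ 2) := by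
        apply Real.sqrt_le_sqrt; exact Finset.sum_le_sum fun c _ => this c
    _ ≤ 2 * (2:ℝ)⁻¹ ^ n := by
        rw [Finset.sum_const]
        simp only [Finset.card_univ, Fintype.card_fin, nsmul_eq_mul]
        rw [show ((2:ℕ):ℝ) * ((2:ℝ)⁻¹ ^ n) ^ 2 = (Real.sqrt 2 * (2:ℝ)⁻¹ ^ n)^2 by
          rw [mul_pow, Real.sq_sqrt (by norm_num)]; push_cast; ring]
        rw [Real.sqrt_sq (by positivity)]
        have h22 := Real.sq_sqrt (show (0:ℝ) ≤ 2 by norm_num)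
        have : Real.sqrt 2 ≤ 2 := by nlinarith [Real.sqrt_nonneg 2]
        nlinarith [Real.sqrt_nonneg 2]

lemma diam_sq_le (n : ℕ) (f : Fin 2 → ℤ) :
    EMetric.diam (sq n f) ≤ ENNReal.ofReal (2 * (2:ℝ)⁻¹ ^ n) :=
  EMetric.diam_le fun x hx y hy => by
    rw [edist_dist]; exact ENNReal.ofReal_le_ofReal (dist_le_of_mem_sq hx hy)




/-- diameter scale at generation n -/
def dd (n : ℕ) : ℝ := 2 * (2:ℝ)⁻¹ ^ n

lemma dd_pos (n : ℕ) : 0 < dd n := by unfold dd; positivity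

lemma dd_tendsto : Tendsto dd atTop (𝓝 0) := by
  have : Tendsto (fun n : ℕ => (2:ℝ)⁻¹ ^ n) atTop (𝓝 0) :=
    tendsto_pow_atTop_nhds_zero_of_lt_one (by norm_num) (by norm_num)
  have h2 := this.const_mul 2
  rw [mul_zero] at h2
  exact h2

lemma dd_small (r₀ : ℝ) (hr₀ : 0 < r₀) : ∀ᶠ n in atTop, dd n < r₀ :=
  dd_tendsto.eventually (Filter.Tendsto.eventually_lt_const hr₀ tendsto_id) |>.mono fun n hn => by
    simpa using hn

/-- The master coarea-type inequality. -/
lemma master (Ht : E2 → ℝ) (L : ℝ≥0) (S : Set E2) (r₀ : ℝ) (hr₀ : 0 < r₀)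
    (hosc : ∀ x ∈ S, ∀ y : E2, dist y x ≤ r₀ → |Ht y - Ht x| ≤ L * dist y x) :
    ∃ φ : ℝ → ℝ≥0∞, Measurable φ ∧
      (∀ h : ℝ, μH[1] {x | x ∈ S ∧ Ht x = h} ≤ φ h) ∧
      ∫⁻ h, φ h ≤ 8 * L * volume (Metric.thickening r₀ S) := by
  classical
  -- center value of a square meeting S
  set c : ℕ → (Fin 2 → ℤ) → ℝ := fun n f =>
    if hne : (sq n f ∩ S).Nonempty then Ht hne.some else 0 with hc
  set G : ℕ → ℝ → ℝ≥0∞ := fun n h => ∑' f : Fin 2 → ℤ,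
    if (sq n f ∩ S).Nonempty then
      (Set.Icc (c n f - L * dd n) (c n f + L * dd n)).indicator
        (fun _ => ENNReal.ofReal (dd n)) h
    else 0 with hG
  have hGmeas : ∀ n, Measurable (G n) := by
    intro n
    apply Measurable.ennreal_tsum
    intro f
    by_cases hne : (sq n f ∩ S).Nonempty
    · simp only [hne, if_true]
      exact Measurable.indicator measurable_const measurableSet_Icc
    · simp only [hne, if_false]
      exact measurable_const
  refine ⟨fun h => liminf (fun n => G n h) atTop, Measurable.liminf fun n => hGmeas n, ?_, ?_⟩
  · -- pointwise bound via covers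
    intro h
    set T : Set E2 := {x | x ∈ S ∧ Ht x = h} with hT
    have hcov : μH[1] T ≤ liminf (fun n => ∑' f : Fin 2 → ℤ,
        (EMetric.diam (if (T ∩ sq n f).Nonempty then sq n f else ∅)) ^ (1:ℝ)) atTop := by
      apply MeasureTheory.Measure.hausdorffMeasure_le_liminf_tsum 1 T (fun n => ENNReal.ofReal (dd n))
      · simpa using ENNReal.tendsto_ofReal dd_tendsto
      · filter_upwards with n f
        by_cases hne : (T ∩ sq n f).Nonempty
        · rw [if_pos hne]
          exact diam_sq_le n f
        · simp [hne]
      · filter_upwards with n x hx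
        refine mem_iUnion.2 ⟨fun cc => ⌊x cc * 2 ^ n⌋, ?_⟩
        have hxs := sq_cover n x
        have hne : (T ∩ sq n (fun cc => ⌊x cc * 2 ^ n⌋)).Nonempty := ⟨x, hx, hxs⟩
        simpa [hne] using hxs
    refine hcov.trans (liminf_le_liminf ?_)
    filter_upwards [dd_small r₀ hr₀] with n hn
    apply ENNReal.tsum_le_tsum
    intro f
    by_cases hne : (T ∩ sq n f).Nonempty
    · obtain ⟨y, hyT, hysq⟩ := id hne
      have hSne : (sq n f ∩ S).Nonempty := ⟨y, hysq, hyT.1⟩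
      have hw : hSne.some ∈ sq n f ∩ S := hSne.some_mem
      have hdist : dist y hSne.some ≤ dd n := dist_le_of_mem_sq hysq hw.1
      have hosc' : |Ht y - Ht hSne.some| ≤ L * dist y hSne.some :=
        hosc _ hw.2 y (hdist.trans hn.le)
      have hmem : h ∈ Set.Icc (c n f - L * dd n) (c n f + L * dd n) := by
        have : |h - c n f| ≤ L * dd n := by
          have : c n f = Ht hSne.some := by simp [hc, hSne]
          rw [this, ← hyT.2]
          refine hosc'.trans ?_
          exact mul_le_mul_of_nonneg_left hdist L.2
        rw [abs_le] at this
        constructor <;> linarith [this.1, this.2]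
      rw [if_pos hne, if_pos hSne, Set.indicator_of_mem hmem, ENNReal.rpow_one]
      exact diam_sq_le n f
    · simp [hne, EMetric.diam, Metric.ediam_empty]
  · -- integral bound
    calc ∫⁻ h, liminf (fun n => G n h) atTop
        ≤ liminf (fun n => ∫⁻ h, G n h) atTop := lintegral_liminf_le fun n => hGmeas n
      _ ≤ 8 * L * volume (Metric.thickening r₀ S) := by
          have hev : ∀ᶠ n in atTop, ∫⁻ h, G n h ≤ 8 * L * volume (Metric.thickening r₀ S) := by
            filter_upwards [dd_small r₀ hr₀] with n hn
            -- compute the integral of G n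
            have hint : ∫⁻ h, G n h = ∑' f : Fin 2 → ℤ,
                if (sq n f ∩ S).Nonempty then 8 * L * volume (sq n f) else 0 := by
              rw [hG]
              simp only
              rw [lintegral_tsum]
              · congr 1
                ext f
                by_cases hne : (sq n f ∩ S).Nonempty
                · simp only [hne, if_true]
                  rw [lintegral_indicator_const measurableSet_Icc, Real.volume_Icc]
                  rw [volume_sq]
                  have h1 : c n f + L * dd n - (c n f - L * dd n) = 2 * (L:ℝ) * dd n := by ring
                  rw [h1]
                  have e1 : (ENNReal.ofReal (dd n)) * ENNReal.ofReal (2 * (L:ℝ) * dd n)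
                      = ENNReal.ofReal (dd n * (2 * (L:ℝ) * dd n)) :=
                    (ENNReal.ofReal_mul (le_of_lt (dd_pos n))).symm
                  rw [e1]
                  have e2 : (8 : ℝ≥0∞) * (L:ℝ≥0∞) * (ENNReal.ofReal ((2:ℝ)⁻¹ ^ n))^2
                      = ENNReal.ofReal (8 * (L:ℝ) * ((2:ℝ)⁻¹^n)^2) := by
                    rw [ENNReal.ofReal_mul (by positivity), ENNReal.ofReal_mul (by norm_num),
                      ENNReal.ofReal_pow (by positivity)]
                    norm_num [ENNReal.ofReal_coe_nnreal]
                  rw [e2]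
                  congr 1
                  unfold dd
                  ring
                · simp [hne]
              · intro f
                by_cases hne : (sq n f ∩ S).Nonempty
                · simp only [hne, if_true]
                  exact (Measurable.indicator measurable_const measurableSet_Icc).aemeasurable
                · simp only [hne, if_false]; exact measurable_const.aemeasurable
            rw [hint]
            have : ∀ f : Fin 2 → ℤ, (if (sq n f ∩ S).Nonempty then 8 * L * volume (sq n f) else 0)
                = Set.indicator {f : Fin 2 → ℤ | (sq n f ∩ S).Nonempty}
                    (fun f => 8 * L * volume (sq n f)) f := by
              intro f
              by_cases hne : (sq n f ∩ S).Nonempty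
              · simp [hne]
              · simp [hne]
            simp_rw [this]
            rw [← tsum_subtype]
            rw [ENNReal.tsum_mul_left]
            have hdisj : Pairwise (Function.onFun Disjoint
                (fun f : ↑{f : Fin 2 → ℤ | (sq n f ∩ S).Nonempty} => sq n f.1)) := by
              intro i j hij
              exact sq_disj n (Subtype.coe_injective.ne hij)
            refine mul_le_mul_right ?_ _
            have hUn : (∑' i : ↑{f : Fin 2 → ℤ | (sq n f ∩ S).Nonempty}, volume (sq n i.1))
                = volume (⋃ i : ↑{f : Fin 2 → ℤ | (sq n f ∩ S).Nonempty}, sq n i.1) :=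
              (measure_iUnion (μ := volume) hdisj (fun f => measurableSet_sq n f.1)).symm
            rw [hUn]
            refine measure_mono ?_
            rintro x hx
            simp only [mem_iUnion] at hx
            obtain ⟨⟨f, hf⟩, hxf⟩ := hx
            obtain ⟨z, hz1, hz2⟩ := hf
            exact Metric.mem_thickening_iff.2 ⟨z, hz2, (dist_le_of_mem_sq hxf hz1).trans_lt hn⟩

          exact (liminf_le_liminf hev).trans (le_of_eq (liminf_const _))



/-- combination lemma: exhaust `T` by increasing families with small coarea bounds. -/
lemma combo (Ht : E2 → ℝ) (T : Set E2) (ε : ℕ → ℝ≥0∞)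
    (hε : Tendsto ε atTop (𝓝 0))
    (S : ℕ → ℕ → Set E2) (hmono : ∀ j, Monotone (S j))
    (hunion : ∀ j, T ⊆ ⋃ m, S j m)
    (hφ : ∀ j m, ∃ φ : ℝ → ℝ≥0∞, Measurable φ ∧
      (∀ h, μH[1] {x | x ∈ S j m ∧ Ht x = h} ≤ φ h) ∧ ∫⁻ h, φ h ≤ ε j) :
    ∀ᵐ h ∂(volume : Measure ℝ), μH[1] {x | x ∈ T ∧ Ht x = h} = 0 := by
  choose φ hφm hφb hφi using hφ
  set ψ : ℕ → ℝ → ℝ≥0∞ := fun j h => liminf (fun m => φ j m h) atTop with hψ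
  have hψm : ∀ j, Measurable (ψ j) := fun j => Measurable.liminf (hφm j)
  have hψb : ∀ j h, μH[1] {x | x ∈ T ∧ Ht x = h} ≤ ψ j h := by
    intro j h
    have h1 : {x | x ∈ T ∧ Ht x = h} ⊆ ⋃ m, {x | x ∈ S j m ∧ Ht x = h} := by
      rintro x ⟨hxT, hxh⟩
      obtain ⟨m, hm⟩ := mem_iUnion.1 (hunion j hxT)
      exact mem_iUnion.2 ⟨m, hm, hxh⟩
    have hdir : Directed (· ⊆ ·) (fun m => {x | x ∈ S j m ∧ Ht x = h}) := by
      intro m m'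
      refine ⟨max m m', ?_, ?_⟩
      · rintro x ⟨hx, hxh⟩; exact ⟨hmono j (le_max_left m m') hx, hxh⟩
      · rintro x ⟨hx, hxh⟩; exact ⟨hmono j (le_max_right m m') hx, hxh⟩
    calc μH[1] {x | x ∈ T ∧ Ht x = h}
        ≤ μH[1] (⋃ m, {x | x ∈ S j m ∧ Ht x = h}) := measure_mono h1
      _ = ⨆ m, μH[1] {x | x ∈ S j m ∧ Ht x = h} := hdir.measure_iUnion
      _ ≤ ψ j h := by
          refine iSup_le fun m => ?_
          refine le_liminf_of_le (by isBoundedDefault) ?_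
          filter_upwards [eventually_ge_atTop m] with m' hm'
          refine le_trans (measure_mono ?_) (hφb j m' h)
          rintro x ⟨hx, hxh⟩
          exact ⟨hmono j hm' hx, hxh⟩
  have hψi : ∀ j, ∫⁻ h, ψ j h ≤ ε j := by
    intro j
    refine (lintegral_liminf_le (hφm j)).trans ?_
    refine (liminf_le_liminf (Eventually.of_forall fun m => hφi j m)).trans_eq (liminf_const _)
  set χ : ℝ → ℝ≥0∞ := fun h => liminf (fun j => ψ j h) atTop with hχ
  have hχm : Measurable χ := Measurable.liminf hψm
  have hχi : ∫⁻ h, χ h = 0 := by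
    refine le_antisymm ?_ (zero_le)
    calc ∫⁻ h, χ h ≤ liminf (fun j => ∫⁻ h, ψ j h) atTop := lintegral_liminf_le hψm
      _ ≤ liminf ε atTop := liminf_le_liminf (Eventually.of_forall hψi)
      _ = 0 := hε.liminf_eq
  have h0 : ∀ᵐ h ∂(volume : Measure ℝ), χ h = 0 := (lintegral_eq_zero_iff hχm).1 hχi
  filter_upwards [h0] with h hh
  refine le_antisymm ?_ (zero_le)
  rw [← hh]
  exact le_liminf_of_le (by isBoundedDefault) (Eventually.of_forall fun j => hψb j h)

lemma lipschitz_osc {Ht : E2 → ℝ} {K : ℝ≥0} (hK : LipschitzWith K Ht) (S : Set E2) (r₀ : ℝ) :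
    ∀ x ∈ S, ∀ y : E2, dist y x ≤ r₀ → |Ht y - Ht x| ≤ K * dist y x := by
  intro x _ y _
  have := hK.dist_le_mul y x
  rwa [Real.dist_eq] at this

lemma bounded_thickening_volume {A : Set E2} (hA : Bornology.IsBounded A) (r : ℝ) :
    volume (Metric.thickening r A) < ⊤ := by
  have hbdd : Bornology.IsBounded (Metric.thickening r A) := hA.thickening
  obtain ⟨R, hR⟩ := hbdd.subset_closedBall (0 : E2)
  exact lt_of_le_of_lt (measure_mono hR) measure_closedBall_lt_top

/-- A.e. finiteness of level sets inside a bounded set. -/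
lemma ae_finite (Ht : E2 → ℝ) (K : ℝ≥0) (hK : LipschitzWith K Ht) (A : Set E2)
    (hA : Bornology.IsBounded A) :
    ∀ᵐ h ∂(volume : Measure ℝ), μH[1] {x | x ∈ A ∧ Ht x = h} ≠ ⊤ := by
  obtain ⟨φ, hm, hb, hi⟩ := master Ht K A 1 one_pos (lipschitz_osc hK A 1)
  have hfin : ∫⁻ h, φ h ≠ ⊤ := by
    refine ne_of_lt (lt_of_le_of_lt hi ?_)
    exact ENNReal.mul_lt_top (ENNReal.mul_lt_top (by norm_num) ENNReal.coe_lt_top)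
      (bounded_thickening_volume hA 1)
  filter_upwards [ae_lt_top hm hfin] with h hh
  exact ((hb h).trans_lt hh).ne

/-- level sets inside a Lebesgue-null set are a.e. `H¹`-null. -/
lemma ae_null_of_null (Ht : E2 → ℝ) (K : ℝ≥0) (hK : LipschitzWith K Ht) (T : Set E2)
    (hT : volume T = 0) :
    ∀ᵐ h ∂(volume : Measure ℝ), μH[1] {x | x ∈ T ∧ Ht x = h} = 0 := by
  have hU : ∀ j : ℕ, ∃ U : Set E2, T ⊆ U ∧ IsOpen U ∧ volume U < (2:ℝ≥0∞)⁻¹ ^ j := by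
    intro j
    refine Set.exists_isOpen_lt_of_lt T _ ?_
    rw [hT]
    exact ENNReal.pow_pos (by norm_num) j
  choose U hUs hUo hUv using hU
  refine combo Ht T (fun j => 8 * K * (2:ℝ≥0∞)⁻¹ ^ j) ?_
    (fun j m => T ∩ {x | ∀ y : E2, dist y x < 1/(m+1) → y ∈ U j}) ?_ ?_ ?_
  · have : Tendsto (fun j : ℕ => (2:ℝ≥0∞)⁻¹ ^ j) atTop (𝓝 0) :=
      ENNReal.tendsto_pow_atTop_nhds_zero_of_lt_one (by norm_num)
    simpa using ENNReal.Tendsto.const_mul this (Or.inr (ENNReal.mul_ne_top (by norm_num) ENNReal.coe_ne_top))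
  · intro j m m' hmm
    refine inter_subset_inter_right _ ?_
    intro x hx y hy
    refine hx y (lt_of_lt_of_le hy ?_)
    apply one_div_le_one_div_of_le
    · positivity
    · push_cast; linarith [(Nat.cast_le (α := ℝ)).2 hmm]
  · intro j x hx
    have hxU : x ∈ U j := hUs j hx
    obtain ⟨ε, hε, hball⟩ := Metric.isOpen_iff.1 (hUo j) x hxU
    obtain ⟨m, hm⟩ := exists_nat_one_div_lt hε
    exact mem_iUnion.2 ⟨m, hx, fun y hy => hball (Metric.mem_ball.2 (hy.trans hm))⟩
  · intro j m
    obtain ⟨φ, hφm, hφb, hφi⟩ := master Ht K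
      (T ∩ {x | ∀ y : E2, dist y x < 1/(m+1) → y ∈ U j}) (1/(2*(m+1)))
      (by positivity) (lipschitz_osc hK _ _)
    refine ⟨φ, hφm, hφb, hφi.trans ?_⟩
    refine mul_le_mul_right ?_ _
    refine le_trans (measure_mono ?_) (hUv j).le
    intro z hz
    obtain ⟨x, hxS, hxz⟩ := Metric.mem_thickening_iff.1 hz
    refine hxS.2 z (hxz.trans_le ?_)
    rw [div_le_div_iff₀ (by positivity) (by positivity)]
    push_cast
    linarith




/-- Sard-type: (differentiability points with zero derivative) have a.e. null level sets. -/
lemma ae_sard (Ht : E2 → ℝ) (A : Set E2) (hA : Bornology.IsBounded A) :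
    ∀ᵐ h ∂(volume : Measure ℝ),
      μH[1] {x | x ∈ A ∩ {x | DifferentiableAt ℝ Ht x ∧ fderiv ℝ Ht x = 0} ∧ Ht x = h}
        = 0 := by
  set Z : Set E2 := A ∩ {x | DifferentiableAt ℝ Ht x ∧ fderiv ℝ Ht x = 0} with hZ
  set C0 : ℝ≥0∞ := volume (Metric.thickening 1 A) with hC0
  refine combo Ht Z (fun j => 8 * ((2:ℝ≥0)⁻¹ ^ j : ℝ≥0) * C0) ?_
    (fun j m => Z ∩ {x | ∀ y : E2, dist y x ≤ 1/(m+1) →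
      |Ht y - Ht x| ≤ (2:ℝ)⁻¹ ^ j * dist y x}) ?_ ?_ ?_
  · have h1 : Tendsto (fun j : ℕ => ((2:ℝ≥0∞))⁻¹ ^ j) atTop (𝓝 0) :=
      ENNReal.tendsto_pow_atTop_nhds_zero_of_lt_one (by norm_num)
    have h2 := ENNReal.Tendsto.const_mul (a := 8 * C0) h1
      (Or.inr (ENNReal.mul_ne_top (by norm_num) (bounded_thickening_volume hA 1).ne))
    rw [mul_zero] at h2
    have heq : (fun j : ℕ => 8 * (((2:ℝ≥0)⁻¹ ^ j : ℝ≥0) : ℝ≥0∞) * C0)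
        = fun j : ℕ => 8 * C0 * ((2:ℝ≥0∞))⁻¹ ^ j := by
      funext j
      rw [ENNReal.coe_pow, ENNReal.coe_inv (by norm_num)]
      push_cast
      ring
    rw [heq]
    exact h2
  · intro j m m' hmm
    refine inter_subset_inter_right _ ?_
    intro x hx y hy
    refine hx y (hy.trans ?_)
    apply one_div_le_one_div_of_le
    · positivity
    · push_cast; linarith [(Nat.cast_le (α := ℝ)).2 hmm]
  · intro j x hx
    obtain ⟨hxA, hdiff, h0⟩ := hx
    have hF : HasFDerivAt Ht (0 : E2 →L[ℝ] ℝ) x := by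
      have := hdiff.hasFDerivAt
      rwa [h0] at this
    have hlo := hF.isLittleO
    simp only [ContinuousLinearMap.zero_apply, sub_zero] at hlo
    have hev := hlo.def (show (0:ℝ) < (2:ℝ)⁻¹ ^ j by positivity)
    rw [Metric.eventually_nhds_iff] at hev
    obtain ⟨ε, hε, hball⟩ := hev
    obtain ⟨m, hm⟩ := exists_nat_one_div_lt (half_pos hε)
    refine mem_iUnion.2 ⟨m, ⟨⟨hxA, hdiff, h0⟩, fun y hy => ?_⟩⟩
    have hylt : dist y x < ε := lt_of_le_of_lt (hy.trans hm.le) (half_lt_self hε)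
    have := hball hylt
    rw [Real.norm_eq_abs, ← dist_eq_norm] at this
    exact this
  · intro j m
    have hosc : ∀ x ∈ (Z ∩ {x | ∀ y : E2, dist y x ≤ 1/(m+1) →
        |Ht y - Ht x| ≤ (2:ℝ)⁻¹ ^ j * dist y x}), ∀ y : E2, dist y x ≤ 1/(m+1) →
        |Ht y - Ht x| ≤ (((2:ℝ≥0)⁻¹ ^ j : ℝ≥0) : ℝ) * dist y x := by
      intro x hx y hy
      refine (hx.2 y hy).trans_eq ?_
      push_cast
      ring
    obtain ⟨φ, hφm, hφb, hφi⟩ := master Ht ((2:ℝ≥0)⁻¹ ^ j)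
      (Z ∩ {x | ∀ y : E2, dist y x ≤ 1/(m+1) → |Ht y - Ht x| ≤ (2:ℝ)⁻¹ ^ j * dist y x})
      (1/(m+1)) (by positivity) hosc
    refine ⟨φ, hφm, hφb, hφi.trans ?_⟩
    refine mul_le_mul_right (measure_mono ?_) _
    intro z hz
    obtain ⟨x, hxS, hxz⟩ := Metric.mem_thickening_iff.1 hz
    refine Metric.mem_thickening_iff.2 ⟨x, hxS.1.1, hxz.trans_le ?_⟩
    rw [div_le_one (by positivity)]
    push_cast
    linarith [(Nat.cast_nonneg m : (0:ℝ) ≤ m)]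



/-- rotation by 90 degrees -/
def rot (e : E2) : E2 := (WithLp.equiv 2 (Fin 2 → ℝ)).symm ![-(e 1), e 0]

lemma rot_apply0 (e : E2) : rot e 0 = -(e 1) := rfl
lemma rot_apply1 (e : E2) : rot e 1 = e 0 := rfl

lemma inner_apply (x y : E2) : ⟪x, y⟫ = x 0 * y 0 + x 1 * y 1 := by
  rw [PiLp.inner_apply]
  simp [Fin.sum_univ_two, RCLike.inner_apply, mul_comm]

lemma norm_sq_eq (x : E2) : ‖x‖ ^ 2 = x 0 ^ 2 + x 1 ^ 2 := by
  rw [EuclideanSpace.norm_eq]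
  rw [Real.sq_sqrt (by positivity)]
  simp [Fin.sum_univ_two]

lemma unit_sum_sq {e : E2} (he : ‖e‖ = 1) : e 0 ^ 2 + e 1 ^ 2 = 1 := by
  rw [← norm_sq_eq, he]; norm_num

lemma expand (e : E2) (he : ‖e‖ = 1) (x : E2) :
    x = ⟪x, e⟫ • e + ⟪x, rot e⟫ • rot e := by
  have hab := unit_sum_sq he
  refine PiLp.ext ?_
  rw [Fin.forall_fin_two]
  constructor
  · show x 0 = ⟪x, e⟫ * e 0 + ⟪x, rot e⟫ * rot e 0
    rw [inner_apply, inner_apply, rot_apply0, rot_apply1]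
    linear_combination (-(x 0)) * hab
  · show x 1 = ⟪x, e⟫ * e 1 + ⟪x, rot e⟫ * rot e 1
    rw [inner_apply, inner_apply, rot_apply0, rot_apply1]
    linear_combination (-(x 1)) * hab

lemma norm_sq_decomp (e : E2) (he : ‖e‖ = 1) (d : E2) :
    ‖d‖ ^ 2 = ⟪d, e⟫ ^ 2 + ⟪d, rot e⟫ ^ 2 := by
  have hab := unit_sum_sq he
  rw [norm_sq_eq]
  simp only [inner_apply, rot_apply0, rot_apply1]
  nlinarith [hab]

lemma smul_vec_lipschitz (v : E2) (hv : ‖v‖ = 1) : LipschitzWith 1 (fun t : ℝ => t • v) := by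
  refine LipschitzWith.of_dist_le_mul fun s t => ?_
  rw [dist_eq_norm, ← sub_smul, norm_smul, hv, Real.dist_eq]
  simp [Real.norm_eq_abs]

/-- Sets satisfying a cone condition are covered by a Lipschitz curve. -/
lemma graph_piece (e : E2) (he : ‖e‖ = 1) (S : Set E2)
    (hS : ∀ x ∈ S, ∀ y ∈ S, |⟪y - x, e⟫| ≤ (1/2) * ‖y - x‖) :
    ∃ f : ℝ → E2, LipschitzWith 2 f ∧ S ⊆ Set.range f := by
  classical
  have key : ∀ x ∈ S, ∀ y ∈ S, |⟪y - x, e⟫| ≤ |⟪y - x, rot e⟫| := by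
    intro x hx y hy
    have h1 := hS x hx y hy
    have h2 := norm_sq_decomp e he (y - x)
    rw [← Real.sqrt_sq_eq_abs, ← Real.sqrt_sq_eq_abs]
    apply Real.sqrt_le_sqrt
    nlinarith [abs_nonneg ⟪y - x, e⟫, norm_nonneg (y - x), sq_abs ⟪y - x, e⟫]
  set p : E2 → ℝ := fun x => ⟪x, rot e⟫ with hp
  set q : E2 → ℝ := fun x => ⟪x, e⟫ with hq
  have hqp : ∀ x ∈ S, ∀ y ∈ S, |q y - q x| ≤ |p y - p x| := by
    intro x hx y hy
    have := key x hx y hy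
    rwa [inner_sub_left, inner_sub_left] at this
  set φ0 : ℝ → ℝ := fun t => if ht : ∃ x ∈ S, p x = t then q ht.choose else 0 with hφ0def
  have hφ0 : ∀ x ∈ S, φ0 (p x) = q x := by
    intro x hx
    have ht : ∃ x' ∈ S, p x' = p x := ⟨x, hx, rfl⟩
    rw [hφ0def]
    simp only
    rw [dif_pos ht]
    obtain ⟨hx', hpx⟩ := ht.choose_spec
    have h := hqp ht.choose hx' x hx
    rw [hpx] at h
    simp only [sub_self, abs_zero] at h
    have : |q x - q ht.choose| = 0 := le_antisymm h (abs_nonneg _)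
    rw [abs_eq_zero] at this
    linarith
  have hlip : LipschitzOnWith 1 φ0 (p '' S) := by
    rw [lipschitzOnWith_iff_dist_le_mul]
    rintro t1 ⟨x1, hx1, rfl⟩ t2 ⟨x2, hx2, rfl⟩
    rw [hφ0 x1 hx1, hφ0 x2 hx2, Real.dist_eq, Real.dist_eq, NNReal.coe_one, one_mul]
    exact hqp x2 hx2 x1 hx1
  obtain ⟨φ, hφlip, hφeq⟩ := hlip.extend_real
  refine ⟨fun t => t • rot e + φ t • e, ?_, ?_⟩
  · have hrot1 : ‖rot e‖ = 1 := by
      have : ‖rot e‖ ^ 2 = 1 := by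
        rw [norm_sq_eq, rot_apply0, rot_apply1]
        nlinarith [unit_sum_sq he]
      nlinarith [norm_nonneg (rot e)]
    have l1 : LipschitzWith 1 (fun t : ℝ => t • rot e) := smul_vec_lipschitz _ hrot1
    have l2 : LipschitzWith 1 (fun t : ℝ => φ t • e) :=
      LipschitzWith.comp (smul_vec_lipschitz e he) hφlip |>.weaken (by norm_num)
    have := l1.add l2
    norm_num at this
    exact this
  · intro x hx
    refine ⟨p x, ?_⟩
    show p x • rot e + φ (p x) • e = x
    have h1 : φ (p x) = q x := by
      rw [← hφeq ⟨x, hx, rfl⟩, hφ0 x hx]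
    rw [h1]
    conv_rhs => rw [expand e he x]
    abel



def vecq (q : ℚ × ℚ) : E2 := (WithLp.equiv 2 (Fin 2 → ℝ)).symm ![(q.1 : ℝ), (q.2 : ℝ)]

lemma vecq_apply0 (q : ℚ × ℚ) : vecq q 0 = (q.1 : ℝ) := rfl
lemma vecq_apply1 (q : ℚ × ℚ) : vecq q 1 = (q.2 : ℝ) := rfl

def dir (q : ℚ × ℚ) : E2 :=
  letI := Classical.propDecidable (vecq q = 0)
  if vecq q = 0 then EuclideanSpace.single 0 1 else ‖vecq q‖⁻¹ • vecq q

lemma dir_of_ne {q : ℚ × ℚ} (h : vecq q ≠ 0) : dir q = ‖vecq q‖⁻¹ • vecq q := by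
  unfold dir
  exact if_neg h

lemma dir_of_eq {q : ℚ × ℚ} (h : vecq q = 0) : dir q = EuclideanSpace.single 0 1 := by
  unfold dir
  exact if_pos h

lemma norm_dir (q : ℚ × ℚ) : ‖dir q‖ = 1 := by
  by_cases h : vecq q = 0
  · rw [dir_of_eq h, EuclideanSpace.norm_single]
    norm_num
  · rw [dir_of_ne h, norm_smul, norm_inv, norm_norm]
    field_simp [norm_ne_zero_iff.2 h]

lemma dir_near (u : E2) (hu : ‖u‖ = 1) : ∃ q : ℚ × ℚ, ‖u - dir q‖ ≤ 1/4 := by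
  obtain ⟨q1, hq1⟩ := exists_rat_near (u 0) (show (0:ℝ) < 1/16 by norm_num)
  obtain ⟨q2, hq2⟩ := exists_rat_near (u 1) (show (0:ℝ) < 1/16 by norm_num)
  set v : E2 := vecq (q1, q2) with hv
  have huv : ‖u - v‖ ≤ 1/8 := by
    have h2 : ‖u - v‖^2 ≤ (1/8)^2 := by
      rw [norm_sq_eq]
      have e0 : (u - v) 0 = u 0 - (q1:ℝ) := by rw [PiLp.sub_apply, hv, vecq_apply0]
      have e1 : (u - v) 1 = u 1 - (q2:ℝ) := by rw [PiLp.sub_apply, hv, vecq_apply1]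
      rw [e0, e1]
      rw [abs_lt] at hq1 hq2
      nlinarith [hq1.1, hq1.2, hq2.1, hq2.2]
    nlinarith [norm_nonneg (u - v)]
  have hv0 : v ≠ 0 := by
    intro h0
    rw [h0, sub_zero, hu] at huv
    norm_num at huv
  refine ⟨(q1, q2), ?_⟩
  have hdir : dir (q1, q2) = ‖v‖⁻¹ • v := dir_of_ne hv0
  rw [hdir]
  have htri : ‖u - ‖v‖⁻¹ • v‖ ≤ ‖u - v‖ + ‖v - ‖v‖⁻¹ • v‖ := by
    calc ‖u - ‖v‖⁻¹ • v‖ = ‖(u - v) + (v - ‖v‖⁻¹ • v)‖ := by congr 1; abel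
      _ ≤ _ := norm_add_le _ _
  have hvn : (0:ℝ) < ‖v‖ := norm_pos_iff.2 hv0
  have h3 : ‖v - ‖v‖⁻¹ • v‖ = |‖v‖ - 1| := by
    have : v - ‖v‖⁻¹ • v = (1 - ‖v‖⁻¹) • v := by rw [sub_smul, one_smul]
    rw [this, norm_smul, Real.norm_eq_abs]
    rw [show |1 - ‖v‖⁻¹| * ‖v‖ = |(1 - ‖v‖⁻¹) * ‖v‖| by
      rw [abs_mul, abs_of_nonneg hvn.le]]
    congr 1
    field_simp
  have h4 : |‖v‖ - 1| ≤ 1/8 := by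
    have h5 := abs_norm_sub_norm_le v u
    rw [norm_sub_rev v u, hu] at h5
    exact h5.trans huv
  calc ‖u - ‖v‖⁻¹ • v‖ ≤ ‖u - v‖ + |‖v‖ - 1| := by rw [← h3]; exact htri
    _ ≤ 1/8 + 1/8 := add_le_add huv h4
    _ ≤ 1/4 := by norm_num

lemma sq_small {m : ℕ} {fidx : Fin 2 → ℤ} {x y : E2}
    (hx : x ∈ sq (m+2) fidx) (hy : y ∈ sq (m+2) fidx) : dist x y ≤ 1/(m+1) := by
  refine (dist_le_of_mem_sq hx hy).trans ?_
  have h1 : 2 * (2:ℝ)⁻¹ ^ (m+2) = ((2:ℝ)^(m+1))⁻¹ := by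
    rw [inv_pow]
    field_simp
    ring
  rw [h1, ← one_div]
  apply one_div_le_one_div_of_le
  · positivity
  · calc ((m:ℝ) + 1) = ((m+1 : ℕ) : ℝ) := by push_cast; ring
      _ ≤ ((2^(m+1) : ℕ) : ℝ) := Nat.cast_le.2 (Nat.lt_two_pow_self (n := m+1)).le
      _ = (2:ℝ)^(m+1) := by push_cast; ring

/-- all points where `Ht` has level `h`, is differentiable with nonzero derivative,
are covered by countably many Lipschitz curves -/
lemma cover_good (Ht : E2 → ℝ) (h : ℝ) :
    ∃ f : ℕ → ℝ → E2, (∀ i, LipschitzWith 2 (f i)) ∧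
      {x | Ht x = h ∧ DifferentiableAt ℝ Ht x ∧ fderiv ℝ Ht x ≠ 0} ⊆
        ⋃ i, Set.range (f i) := by
  classical
  set D : Set E2 := {x | Ht x = h ∧ DifferentiableAt ℝ Ht x ∧ fderiv ℝ Ht x ≠ 0} with hD
  set g : E2 → E2 := fun x => gradient Ht x with hg
  have hgx_ne : ∀ x ∈ D, g x ≠ 0 := by
    intro x hx h0
    refine hx.2.2 ?_
    have : fderiv ℝ Ht x = (InnerProductSpace.toDual ℝ E2) (g x) := by
      rw [hg]
      simp only [gradient]
      rw [LinearIsometryEquiv.apply_symm_apply]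
    rw [this, h0, map_zero]
  set piece : (ℚ × ℚ) × ℕ × (Fin 2 → ℤ) → Set E2 := fun i =>
    {x | x ∈ D ∧ ‖‖g x‖⁻¹ • g x - dir i.1‖ ≤ 1/4 ∧
      (∀ y : E2, dist y x ≤ 1/(i.2.1+1) →
        |Ht y - Ht x - ⟪g x, y - x⟫| ≤ ‖g x‖/4 * dist y x)}
      ∩ sq (i.2.1+2) i.2.2 with hpiece
  have hcone : ∀ i, ∀ x ∈ piece i, ∀ y ∈ piece i,
      |⟪y - x, dir i.1⟫| ≤ (1/2) * ‖y - x‖ := by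
    rintro ⟨qv, m, fidx⟩ x ⟨⟨hxD, hxdir, hxosc⟩, hxsq⟩ y ⟨⟨hyD, _, _⟩, hysq⟩
    have hdist : dist y x ≤ 1/(m+1) := sq_small hysq hxsq
    have hlev : Ht y - Ht x = 0 := by rw [hxD.1, hyD.1, sub_self]
    have h1 := hxosc y hdist
    rw [hlev, zero_sub, abs_neg] at h1
    have hgne := hgx_ne x hxD
    have hgpos : (0:ℝ) < ‖g x‖ := norm_pos_iff.2 hgne
    have h2 : |⟪y - x, ‖g x‖⁻¹ • g x⟫| ≤ 1/4 * dist y x := by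
      rw [real_inner_smul_right, abs_mul, abs_inv, abs_norm]
      rw [real_inner_comm]
      calc ‖g x‖⁻¹ * |⟪g x, y - x⟫| ≤ ‖g x‖⁻¹ * (‖g x‖/4 * dist y x) := by
            exact mul_le_mul_of_nonneg_left h1 (by positivity)
        _ = 1/4 * dist y x := by field_simp
    have h3 : |⟪y - x, dir qv - ‖g x‖⁻¹ • g x⟫| ≤ 1/4 * ‖y - x‖ := by
      calc |⟪y - x, dir qv - ‖g x‖⁻¹ • g x⟫| ≤ ‖y - x‖ * ‖dir qv - ‖g x‖⁻¹ • g x‖ :=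
            abs_real_inner_le_norm _ _
        _ = ‖y - x‖ * ‖‖g x‖⁻¹ • g x - dir qv‖ := by rw [norm_sub_rev (dir qv)]
        _ ≤ ‖y - x‖ * (1/4) := mul_le_mul_of_nonneg_left hxdir (norm_nonneg _)
        _ = 1/4 * ‖y - x‖ := by ring
    have hsplit : ⟪y - x, dir qv⟫
        = ⟪y - x, ‖g x‖⁻¹ • g x⟫ + ⟪y - x, dir qv - ‖g x‖⁻¹ • g x⟫ := by
      rw [← inner_add_right]
      congr 1
      abel
    rw [hsplit]
    have hdn : dist y x = ‖y - x‖ := dist_eq_norm y x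
    calc |⟪y - x, ‖g x‖⁻¹ • g x⟫ + ⟪y - x, dir qv - ‖g x‖⁻¹ • g x⟫|
        ≤ |⟪y - x, ‖g x‖⁻¹ • g x⟫| + |⟪y - x, dir qv - ‖g x‖⁻¹ • g x⟫| := abs_add_le _ _
      _ ≤ 1/4 * dist y x + 1/4 * ‖y - x‖ := add_le_add h2 h3
      _ = 1/2 * ‖y - x‖ := by rw [hdn]; ring
  have hcover : D ⊆ ⋃ i, piece i := by
    intro x hx
    have hgne := hgx_ne x hx
    have hgpos : (0:ℝ) < ‖g x‖ := norm_pos_iff.2 hgne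
    have hu : ‖‖g x‖⁻¹ • g x‖ = 1 := by
      rw [norm_smul, norm_inv, norm_norm]
      field_simp
    obtain ⟨qv, hqv⟩ := dir_near _ hu
    have hgr : HasGradientAt Ht (g x) x := hx.2.1.hasGradientAt
    have hlo := hasGradientAt_iff_isLittleO.1 hgr
    have hev := hlo.def (show (0:ℝ) < ‖g x‖/4 by positivity)
    rw [Metric.eventually_nhds_iff] at hev
    obtain ⟨ε, hε, hball⟩ := hev
    obtain ⟨m, hm⟩ := exists_nat_one_div_lt (half_pos hε)
    refine mem_iUnion.2 ⟨(qv, m, fun c => ⌊x c * 2 ^ (m+2)⌋), ⟨⟨hx, hqv, ?_⟩, sq_cover _ x⟩⟩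
    intro y hy
    have hylt : dist y x < ε := lt_of_le_of_lt (hy.trans hm.le) (half_lt_self hε)
    have := hball hylt
    rw [Real.norm_eq_abs, ← dist_eq_norm y x] at this
    exact this
  choose F hFlip hFsub using fun i : (ℚ × ℚ) × ℕ × (Fin 2 → ℤ) =>
    graph_piece (dir i.1) (norm_dir i.1) (piece i) (hcone i)
  obtain ⟨σ, hσ⟩ := exists_surjective_nat ((ℚ × ℚ) × ℕ × (Fin 2 → ℤ))
  refine ⟨fun n => F (σ n), fun n => hFlip (σ n), ?_⟩
  intro x hx
  obtain ⟨i, hi⟩ := mem_iUnion.1 (hcover hx)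
  obtain ⟨n, rfl⟩ := hσ i
  exact mem_iUnion.2 ⟨n, hFsub _ hi⟩


end LSR

end Aux

open LSR

/-- **Structure of level sets of Lipschitz functions, I (rectifiability).**
Let `Ω ⊆ ℝ²` be open and `H : Ω → ℝ` Lipschitz with bounded support.  Then for a.e.
`h ∈ H(Ω)` the level set `E_h = H⁻¹(h)` has finite `H¹`-measure, is `1`-rectifiable,
and `H` is differentiable with nonvanishing gradient at `H¹`-a.e. point of `E_h`. -/
theorem level_sets_rectifiable
    (Ω : Set (EuclideanSpace ℝ (Fin 2))) (hΩ : IsOpen Ω)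
    (H : EuclideanSpace ℝ (Fin 2) → ℝ) (K : ℝ≥0) (hlip : LipschitzOnWith K H Ω)
    (hsupp : Bornology.IsBounded {x ∈ Ω | H x ≠ 0}) :
    ∀ᵐ h ∂(volume : Measure ℝ), h ∈ H '' Ω →
      (μH[1] {x ∈ Ω | H x = h} ≠ ⊤) ∧
      (∃ f : ℕ → ℝ → EuclideanSpace ℝ (Fin 2),
        (∀ i, ∃ Ki : ℝ≥0, LipschitzWith Ki (f i)) ∧
        μH[1] ({x ∈ Ω | H x = h} \ ⋃ i, Set.range (f i)) = 0) ∧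
      (∀ᵐ x ∂((μH[1] : Measure (EuclideanSpace ℝ (Fin 2))).restrict {x ∈ Ω | H x = h}),
        ∃ g : EuclideanSpace ℝ (Fin 2), HasGradientAt H g x ∧ g ≠ 0) := by
  obtain ⟨Ht, hHtlip, hHteq⟩ := hlip.extend_real
  set A : Set E2 := {x ∈ Ω | H x ≠ 0} with hA
  have hrad : volume {x : E2 | ¬ DifferentiableAt ℝ Ht x} = 0 := by
    have h := hHtlip.ae_differentiableAt (μ := (volume : Measure E2))
    rwa [ae_iff] at h
  have h1 := ae_finite Ht K hHtlip A hsupp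
  have h2 := ae_null_of_null Ht K hHtlip _ hrad
  have h3 := ae_sard Ht A hsupp
  have h0 : ∀ᵐ h : ℝ ∂(volume : Measure ℝ), h ≠ (0:ℝ) := by
    rw [ae_iff]
    have : {a : ℝ | ¬ a ≠ 0} = {(0:ℝ)} := by ext a; simp
    rw [this]
    exact measure_singleton 0
  filter_upwards [h1, h2, h3, h0] with h hfin hnull hsard hne0
  intro _
  have hEhA : {x ∈ Ω | H x = h} = {x | x ∈ A ∧ Ht x = h} := by
    ext x
    simp only [hA, mem_setOf_eq, mem_sep_iff]
    constructor
    · rintro ⟨hxΩ, hxh⟩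
      exact ⟨⟨hxΩ, by rw [hxh]; exact hne0⟩, by rw [← hHteq hxΩ, hxh]⟩
    · rintro ⟨⟨hxΩ, _⟩, hxh⟩
      exact ⟨hxΩ, by rw [hHteq hxΩ]; exact hxh⟩
  have hbadN : μH[1] ({x ∈ Ω | H x = h} ∩ {x | ¬ DifferentiableAt ℝ Ht x}) = 0 := by
    refine measure_mono_null ?_ hnull
    rintro x ⟨hx1, hx2⟩
    rw [hEhA] at hx1
    exact ⟨hx2, hx1.2⟩
  have hbadZ : μH[1] ({x ∈ Ω | H x = h} ∩
      {x | DifferentiableAt ℝ Ht x ∧ fderiv ℝ Ht x = 0}) = 0 := by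
    refine measure_mono_null ?_ hsard
    rintro x ⟨hx1, hx2⟩
    rw [hEhA] at hx1
    exact ⟨⟨hx1.1, hx2⟩, hx1.2⟩
  refine ⟨by rw [hEhA]; exact hfin, ?_, ?_⟩
  · obtain ⟨f, hflip, hfsub⟩ := cover_good Ht h
    refine ⟨f, fun i => ⟨2, hflip i⟩, ?_⟩
    refine measure_mono_null ?_ (measure_union_null hbadN hbadZ)
    rintro x ⟨hxEh, hxnot⟩
    by_cases hdiff : DifferentiableAt ℝ Ht x
    · by_cases hfd : fderiv ℝ Ht x = 0
      · exact Or.inr ⟨hxEh, hdiff, hfd⟩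
      · exfalso
        apply hxnot
        apply hfsub
        have hxA := hEhA ▸ hxEh
        exact ⟨hxA.2, hdiff, hfd⟩
    · exact Or.inl ⟨hxEh, hdiff⟩
  · rw [ae_iff]
    set W : Set E2 := Ωᶜ ∪ ({x | ¬ DifferentiableAt ℝ Ht x} ∪
      {x | DifferentiableAt ℝ Ht x ∧ fderiv ℝ Ht x = 0}) with hW
    have hWmeas : MeasurableSet W := by
      refine (hΩ.measurableSet.compl).union (MeasurableSet.union ?_ ?_)
      · exact (measurableSet_of_differentiableAt ℝ Ht).compl
      · exact (measurableSet_of_differentiableAt ℝ Ht).inter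
          ((measurable_fderiv ℝ Ht) (MeasurableSet.singleton 0))
    have hWnull : ((μH[1] : Measure E2).restrict {x ∈ Ω | H x = h}) W = 0 := by
      rw [Measure.restrict_apply hWmeas]
      refine measure_mono_null ?_ (measure_union_null hbadN hbadZ)
      rintro x ⟨hxW, hxEh⟩
      have hxΩ : x ∈ Ω := hxEh.1
      rcases hxW with h' | h' | h'
      · exact absurd hxΩ h'
      · exact Or.inl ⟨hxEh, h'⟩
      · exact Or.inr ⟨hxEh, h'⟩
    refine measure_mono_null ?_ hWnull
    intro x hx
    by_contra hxW
    apply hx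
    simp only [hW, mem_union, mem_compl_iff, mem_setOf_eq, not_or] at hxW
    obtain ⟨hxΩ, hxd, hxz⟩ := hxW
    rw [not_not] at hxΩ hxd
    have hfd : fderiv ℝ Ht x ≠ 0 := fun hc => hxz ⟨hxd, hc⟩
    refine ⟨gradient Ht x, ?_, ?_⟩
    · have hgr : HasGradientAt Ht (gradient Ht x) x := hxd.hasGradientAt
      rw [hasGradientAt_iff_hasFDerivAt] at hgr ⊢
      have heqn : H =ᶠ[𝓝 x] Ht := by
        filter_upwards [hΩ.mem_nhds hxΩ] with y hy using hHteq hy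
      exact heqn.hasFDerivAt_iff.2 hgr
    · intro hg0
      apply hfd
      have hfe : fderiv ℝ Ht x = (InnerProductSpace.toDual ℝ E2) (gradient Ht x) := by
        simp only [gradient]
        rw [LinearIsometryEquiv.apply_symm_apply]
      rw [hfe, hg0, map_zero]
end
end
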